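/- Let μ, ν be real numbers with ν > 0 and μ² + ν² ≠ 1, set z = μ + iν, and let n ≥ 1. Then the block-diagonal matrix A = Ψ(J(z,n)) ⊕ Ψ(J(z⁻¹,n)) ∈ GL(4n,ℝ), i.e., the direct sum of the real Jordan blocks J_ℝ(μ ± iν, 2n) and J_ℝ(μ/(μ²+ν²) ∓ i ν/(μ²+ν²), 2n), is strongly reversible in GL(4n,ℝ); that is, there exists an invertible 4n×4n real matrix g with g² = I and g·A·g⁻¹ = A⁻¹. -/

import Mathlib

open Matrix

set_option maxHeartbeats 1000000

/-- The Jordan block `J(λ, m)`: an `m × m` matrix with `λ` on the diagonal,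
`1` on the superdiagonal, and `0` elsewhere. -/
def jordanBlock {D : Type*} [Ring D] (lam : D) (m : ℕ) : Matrix (Fin m) (Fin m) D :=
  Matrix.of fun i j => if i = j then lam else if (i : ℕ) + 1 = (j : ℕ) then 1 else 0

/-- The realification embedding `Ψ : M(n,ℂ) → M(2n,ℝ)`, replacing each complex entry
`z` by the 2×2 real block `((Re z, Im z), (-Im z, Re z))`. -/
def Psi {n : ℕ} (A : Matrix (Fin n) (Fin n) ℂ) :
    Matrix (Fin n × Fin 2) (Fin n × Fin 2) ℝ :=
  Matrix.of fun p q =>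
    !![(A p.1 q.1).re, (A p.1 q.1).im; -(A p.1 q.1).im, (A p.1 q.1).re] p.2 q.2

/-- The standard embedding of `ℂ` into the real quaternions,
sending `a + b i` to `a + b 𝐢`. -/
def toQuat (z : ℂ) : Quaternion ℝ := ⟨z.re, z.im, 0, 0⟩

/-- `X ∈ gl(n,D)` is `Ad_{GL(n,D)}`-real: there is an invertible matrix `g`
with `g X g⁻¹ = -X`. -/
def AdjReal {D : Type*} [Ring D] {ι : Type*} [Fintype ι] [DecidableEq ι]
    (X : Matrix ι ι D) : Prop :=
  ∃ g : (Matrix ι ι D)ˣ, g.val * X * (g⁻¹).val = -X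

/-- `X ∈ gl(n,D)` is strongly `Ad_{GL(n,D)}`-real: there is an invertible matrix `g`
with `g² = I` and `g X g⁻¹ = -X`. -/
def StronglyAdjReal {D : Type*} [Ring D] {ι : Type*} [Fintype ι] [DecidableEq ι]
    (X : Matrix ι ι D) : Prop :=
  ∃ g : (Matrix ι ι D)ˣ, g * g = 1 ∧ g.val * X * (g⁻¹).val = -X

/-- `A` is reversible in `GL(n,D)`: `A` is invertible and there is an invertible
matrix `g` with `g A g⁻¹ = A⁻¹`. -/
def Reversible {D : Type*} [Ring D] {ι : Type*} [Fintype ι] [DecidableEq ι]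
    (A : Matrix ι ι D) : Prop :=
  ∃ a : (Matrix ι ι D)ˣ, a.val = A ∧ ∃ g : (Matrix ι ι D)ˣ, g * a * g⁻¹ = a⁻¹

/-- `A` is strongly reversible in `GL(n,D)`: `A` is invertible and there is an
invertible matrix `g` with `g² = I` and `g A g⁻¹ = A⁻¹`. -/
def StronglyReversible {D : Type*} [Ring D] {ι : Type*} [Fintype ι] [DecidableEq ι]
    (A : Matrix ι ι D) : Prop :=
  ∃ a : (Matrix ι ι D)ˣ, a.val = A ∧ ∃ g : (Matrix ι ι D)ˣ, g * g = 1 ∧ g * a * g⁻¹ = a⁻¹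

namespace Stmt9Aux

/-- Left multiplication by a Jordan block, entrywise. -/
lemma jordan_mul {n : ℕ} (lam : ℂ) (M : Matrix (Fin n) (Fin n) ℂ) (i j : Fin n) :
    (jordanBlock lam n * M) i j =
      lam * M i j + (if h : (i : ℕ) + 1 < n then M ⟨(i : ℕ) + 1, h⟩ j else 0) := by
  rw [Matrix.mul_apply]
  by_cases h : (i : ℕ) + 1 < n
  · rw [dif_pos h]
    have hne : i ≠ (⟨(i : ℕ) + 1, h⟩ : Fin n) := by
      intro he; have := congrArg Fin.val he; simp at this
    have key : ∀ k : Fin n, jordanBlock lam n i k * M k j =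
        (if i = k then lam * M k j else 0) +
        (if (⟨(i : ℕ) + 1, h⟩ : Fin n) = k then M k j else 0) := by
      intro k
      simp only [jordanBlock, Matrix.of_apply]
      rcases eq_or_ne i k with h1 | h1
      · subst h1; simp [Ne.symm hne]
      · rw [if_neg h1, if_neg h1]
        rcases eq_or_ne (⟨(i : ℕ) + 1, h⟩ : Fin n) k with h2 | h2
        · subst h2; simp
        · have h3 : (i : ℕ) + 1 ≠ (k : ℕ) := fun he => h2 (Fin.ext he)
          simp [h3, h2]
    rw [Finset.sum_congr rfl (fun k _ => key k), Finset.sum_add_distrib,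
      Finset.sum_ite_eq, Finset.sum_ite_eq]
    simp
  · rw [dif_neg h]
    have key : ∀ k : Fin n, jordanBlock lam n i k * M k j =
        (if i = k then lam * M k j else 0) := by
      intro k
      simp only [jordanBlock, Matrix.of_apply]
      rcases eq_or_ne i k with h1 | h1
      · subst h1; simp
      · have h3 : (i : ℕ) + 1 ≠ (k : ℕ) := by
          have := k.isLt; omega
        simp [h1, h3]
    rw [Finset.sum_congr rfl (fun k _ => key k), Finset.sum_ite_eq]
    simp

/-- Right multiplication by a Jordan block, entrywise. -/
lemma mul_jordan {n : ℕ} (lam : ℂ) (M : Matrix (Fin n) (Fin n) ℂ) (i j : Fin n) :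
    (M * jordanBlock lam n) i j =
      M i j * lam + (if h : 0 < (j : ℕ) then
        M i ⟨(j : ℕ) - 1, by omega⟩ else 0) := by
  rw [Matrix.mul_apply]
  by_cases h : 0 < (j : ℕ)
  · rw [dif_pos h]
    set j' : Fin n := ⟨(j : ℕ) - 1, by omega⟩ with hj'
    have hne : j' ≠ j := by
      intro he; have := congrArg Fin.val he; simp [hj'] at this; omega
    have key : ∀ k : Fin n, M i k * jordanBlock lam n k j =
        (if k = j then M i k * lam else 0) +
        (if k = j' then M i k else 0) := by
      intro k
      simp only [jordanBlock, Matrix.of_apply]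
      rcases eq_or_ne k j with h1 | h1
      · rw [if_pos h1, if_pos h1, if_neg (fun he => hne (he.symm.trans h1)), add_zero]
      · rcases eq_or_ne k j' with h2 | h2
        · have hkv : (k : ℕ) = (j : ℕ) - 1 := by rw [h2]
          have hc : (k : ℕ) + 1 = (j : ℕ) := by omega
          rw [if_neg h1, if_neg h1, if_pos hc, if_pos h2, mul_one, zero_add]
        · have hc : (k : ℕ) + 1 ≠ (j : ℕ) := by
            intro he
            apply h2
            apply Fin.ext
            show (k : ℕ) = (j : ℕ) - 1
            omega
          rw [if_neg h1, if_neg h1, if_neg hc, if_neg h2, mul_zero, add_zero]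
    rw [Finset.sum_congr rfl (fun k _ => key k), Finset.sum_add_distrib,
      Finset.sum_ite_eq', Finset.sum_ite_eq']
    simp
  · rw [dif_neg h]
    have hj0 : (j : ℕ) = 0 := by omega
    have key : ∀ k : Fin n, M i k * jordanBlock lam n k j =
        (if k = j then M i k * lam else 0) := by
      intro k
      simp only [jordanBlock, Matrix.of_apply]
      rcases eq_or_ne k j with h1 | h1
      · rw [if_pos h1, if_pos h1]
      · have h3 : (k : ℕ) + 1 ≠ (j : ℕ) := by omega
        rw [if_neg h1, if_neg h1, if_neg h3, mul_zero]
    rw [Finset.sum_congr rfl (fun k _ => key k), Finset.sum_ite_eq']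
    simp

/-- The entries of the conjugating matrix, defined recursively. -/
def pm (lam : ℂ) : ℕ → ℕ → ℂ
  | 0, 0 => 1
  | 0, _ + 1 => 0
  | _ + 1, 0 => 0
  | i + 1, j + 1 => -lam ^ 2 * pm lam i j - lam * pm lam (i + 1) j

lemma pm_lower (lam : ℂ) : ∀ j i : ℕ, j < i → pm lam i j = 0 := by
  intro j
  induction j with
  | zero =>
    intro i hi
    obtain ⟨k, rfl⟩ := Nat.exists_eq_succ_of_ne_zero (by omega : i ≠ 0)
    rfl
  | succ j ih =>
    intro i hi
    obtain ⟨k, rfl⟩ := Nat.exists_eq_succ_of_ne_zero (by omega : i ≠ 0)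
    show -lam ^ 2 * pm lam k j - lam * pm lam (k + 1) j = 0
    rw [ih k (by omega), ih (k + 1) (by omega)]
    ring

lemma pm_diag (lam : ℂ) : ∀ i : ℕ, pm lam i i = (-lam ^ 2) ^ i := by
  intro i
  induction i with
  | zero => rfl
  | succ i ih =>
    show -lam ^ 2 * pm lam i i - lam * pm lam (i + 1) i = _
    rw [ih, pm_lower lam i (i + 1) (by omega)]
    ring

/-- The conjugating matrix. -/
def Pmat (lam : ℂ) (n : ℕ) : Matrix (Fin n) (Fin n) ℂ :=
  Matrix.of fun i j => pm lam (i : ℕ) (j : ℕ)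

lemma Pmat_det (lam : ℂ) (n : ℕ) :
    (Pmat lam n).det = ∏ i : Fin n, (-lam ^ 2) ^ (i : ℕ) := by
  rw [Matrix.det_of_upperTriangular]
  · exact Finset.prod_congr rfl fun i _ => pm_diag lam i
  · intro i j hij
    exact pm_lower lam _ _ hij

lemma Pmat_isUnit (lam : ℂ) (hlam : lam ≠ 0) (n : ℕ) : IsUnit (Pmat lam n) := by
  rw [Matrix.isUnit_iff_isUnit_det, Pmat_det, isUnit_iff_ne_zero]
  refine Finset.prod_ne_zero_iff.2 fun i _ => pow_ne_zero _ ?_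
  simp [hlam]

lemma jordan_det (lam : ℂ) (n : ℕ) : (jordanBlock lam n).det = lam ^ n := by
  rw [Matrix.det_of_upperTriangular]
  · simp [jordanBlock]
  · intro i j hij
    have h1 : i ≠ j := fun he => absurd he.symm (ne_of_lt hij)
    have h2 : (i : ℕ) + 1 ≠ (j : ℕ) := by
      have : (j : ℕ) < (i : ℕ) := hij
      omega
    simp [jordanBlock, h1, h2]

lemma jordan_isUnit (lam : ℂ) (hlam : lam ≠ 0) (n : ℕ) : IsUnit (jordanBlock lam n) := by
  rw [Matrix.isUnit_iff_isUnit_det, jordan_det, isUnit_iff_ne_zero]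
  exact pow_ne_zero _ hlam

/-- The key identity: `J(λ) P J(λ⁻¹) = P`. -/
lemma key_identity (lam : ℂ) (hlam : lam ≠ 0) (n : ℕ) :
    jordanBlock lam n * Pmat lam n * jordanBlock lam⁻¹ n = Pmat lam n := by
  ext i j
  rw [mul_jordan, jordan_mul]
  by_cases hj : 0 < (j : ℕ)
  · rw [dif_pos hj, jordan_mul]
    by_cases hi : (i : ℕ) + 1 < n
    · rw [dif_pos hi, dif_pos hi]
      simp only [Pmat, Matrix.of_apply]
      obtain ⟨j', hj'⟩ : ∃ j', (j : ℕ) = j' + 1 := ⟨(j : ℕ) - 1, by omega⟩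
      rw [hj']
      simp only [Nat.add_sub_cancel]
      have hrec : pm lam ((i : ℕ) + 1) (j' + 1) =
          -lam ^ 2 * pm lam (i : ℕ) j' - lam * pm lam ((i : ℕ) + 1) j' := rfl
      rw [hrec]
      field_simp
      ring
    · rw [dif_neg hi, dif_neg hi]
      simp only [Pmat, Matrix.of_apply]
      have hz : pm lam (i : ℕ) ((j : ℕ) - 1) = 0 := by
        apply pm_lower
        have h1 := j.isLt
        have h2 := i.isLt
        omega
      rw [hz]
      field_simp
      simp
  · rw [dif_neg hj]
    have hj0 : (j : ℕ) = 0 := by omega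
    by_cases hi : (i : ℕ) + 1 < n
    · rw [dif_pos hi]
      simp only [Pmat, Matrix.of_apply, hj0]
      have hz : pm lam ((i : ℕ) + 1) 0 = 0 := rfl
      rw [hz]
      field_simp
      simp
    · rw [dif_neg hi]
      field_simp
      simp


/-- `ℂ → M(2,ℝ)` as a ring hom. -/
def phi : ℂ →+* Matrix (Fin 2) (Fin 2) ℝ where
  toFun z := !![z.re, z.im; -z.im, z.re]
  map_one' := by
    rw [Matrix.one_fin_two]
    norm_num
  map_mul' z w := by
    ext i j
    fin_cases i <;> fin_cases j <;>
      simp [Matrix.mul_apply, Fin.sum_univ_two, Complex.mul_re, Complex.mul_im] <;> ring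
  map_zero' := by
    norm_num
    ext i j
    fin_cases i <;> fin_cases j <;> simp
  map_add' z w := by
    ext i j
    fin_cases i <;> fin_cases j <;> simp [Complex.add_re, Complex.add_im] <;> ring

/-- The realification as a ring hom. -/
def PsiHom (n : ℕ) : Matrix (Fin n) (Fin n) ℂ →+* Matrix (Fin n × Fin 2) (Fin n × Fin 2) ℝ :=
  ((Matrix.compRingEquiv (Fin n) (Fin 2) ℝ) : Matrix (Fin n) (Fin n) (Matrix (Fin 2) (Fin 2) ℝ) ≃+* _).toRingHom.comp
    (RingHom.mapMatrix phi)

lemma Psi_eq {n : ℕ} (A : Matrix (Fin n) (Fin n) ℂ) : Psi A = PsiHom n A := by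
  ext ⟨i, a⟩ ⟨j, b⟩
  show _ = (Matrix.compRingEquiv (Fin n) (Fin 2) ℝ) (A.map phi) (i, a) (j, b)
  simp only [Matrix.compRingEquiv, Matrix.compAddEquiv, Matrix.comp, RingEquiv.coe_mk,
    Equiv.coe_fn_mk, Matrix.map_apply]
  rfl

end Stmt9Aux


theorem Stmt9Aux.stmt9' (μ ν : ℝ) (hν : 0 < ν) (h1 : μ ^ 2 + ν ^ 2 ≠ 1) (n : ℕ) (hn : 1 ≤ n) :
    ∃ a : (Matrix ((Fin n × Fin 2) ⊕ (Fin n × Fin 2)) ((Fin n × Fin 2) ⊕ (Fin n × Fin 2)) ℝ)ˣ,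
      a.val = (fromBlocks (Psi (jordanBlock ((⟨μ, ν⟩ : ℂ)) n)) 0 0
        (Psi (jordanBlock ((⟨μ, ν⟩ : ℂ))⁻¹ n))) ∧
      ∃ g : (Matrix ((Fin n × Fin 2) ⊕ (Fin n × Fin 2)) ((Fin n × Fin 2) ⊕ (Fin n × Fin 2)) ℝ)ˣ,
        g * g = 1 ∧ g * a * g⁻¹ = a⁻¹ := by
  classical
  set z : ℂ := ⟨μ, ν⟩ with hzdef
  have hz0 : z ≠ 0 := by
    intro h
    have : z.im = 0 := by rw [h]; rfl
    rw [hzdef] at this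
    exact hν.ne' this
  have hzinv0 : z⁻¹ ≠ 0 := inv_ne_zero hz0
  have hJ := Stmt9Aux.jordan_isUnit z hz0 n
  have hJ' := Stmt9Aux.jordan_isUnit z⁻¹ hzinv0 n
  have hP := Stmt9Aux.Pmat_isUnit z hz0 n
  set uJ := hJ.unit with huJ
  set uJ' := hJ'.unit with huJ'
  set uP := hP.unit with huP
  have suJ : uJ.val = jordanBlock z n := hJ.unit_spec
  have suJ' : uJ'.val = jordanBlock z⁻¹ n := hJ'.unit_spec
  have suP : uP.val = Stmt9Aux.Pmat z n := hP.unit_spec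
  -- unit-level key identity over ℂ
  have hrel : uJ * uP * uJ' = uP := by
    apply Units.ext
    simp only [Units.val_mul, suJ, suJ', suP]
    exact Stmt9Aux.key_identity z hz0 n
  have hrel2 : uP * uJ' * uP⁻¹ = uJ⁻¹ := by
    have h2 : uP * uJ' = uJ⁻¹ * uP := by
      calc uP * uJ' = uJ⁻¹ * (uJ * uP * uJ') := by group
        _ = uJ⁻¹ * uP := by rw [hrel]
    rw [h2]; group
  -- push to ℝ via the realification ring hom
  set m := Units.map (Stmt9Aux.PsiHom n).toMonoidHom with hm
  set vJ := m uJ with hvJ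
  set vJ' := m uJ' with hvJ'
  set vP := m uP with hvP
  have hrelR : vP * vJ' * vP⁻¹ = vJ⁻¹ := by
    rw [hvP, hvJ', hvJ, ← _root_.map_inv m, ← _root_.map_inv m, ← _root_.map_mul,
      ← _root_.map_mul, hrel2]
  have h5 : vP * vJ'⁻¹ * vP⁻¹ = vJ := by
    have h : vJ = (vP * vJ' * vP⁻¹)⁻¹ := by rw [hrelR, inv_inv]
    rw [h]; group
  have hrelR2 : vP⁻¹ * vJ * vP = vJ'⁻¹ := by
    rw [← h5]; group
  have e1 : vP.val * vJ'.val * (vP⁻¹).val = (vJ⁻¹).val := by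
    have := congrArg Units.val hrelR
    simpa [Units.val_mul] using this
  have e2 : (vP⁻¹).val * vJ.val * vP.val = (vJ'⁻¹).val := by
    have := congrArg Units.val hrelR2
    simpa [Units.val_mul] using this
  -- the involution
  have hgg : (fromBlocks 0 vP.val (vP⁻¹).val 0 :
      Matrix ((Fin n × Fin 2) ⊕ (Fin n × Fin 2)) ((Fin n × Fin 2) ⊕ (Fin n × Fin 2)) ℝ) *
      fromBlocks 0 vP.val (vP⁻¹).val 0 = 1 := by
    rw [fromBlocks_multiply]
    simp only [Matrix.zero_mul, Matrix.mul_zero, add_zero, zero_add,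
      Units.mul_inv, Units.inv_mul, Matrix.fromBlocks_one]
  have haa : (fromBlocks vJ.val 0 0 vJ'.val :
      Matrix ((Fin n × Fin 2) ⊕ (Fin n × Fin 2)) ((Fin n × Fin 2) ⊕ (Fin n × Fin 2)) ℝ) *
      fromBlocks (vJ⁻¹).val 0 0 (vJ'⁻¹).val = 1 := by
    rw [fromBlocks_multiply]
    simp only [Matrix.zero_mul, Matrix.mul_zero, add_zero, zero_add,
      Units.mul_inv, Units.inv_mul, Matrix.fromBlocks_one]
  have haa' : (fromBlocks (vJ⁻¹).val 0 0 (vJ'⁻¹).val :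
      Matrix ((Fin n × Fin 2) ⊕ (Fin n × Fin 2)) ((Fin n × Fin 2) ⊕ (Fin n × Fin 2)) ℝ) *
      fromBlocks vJ.val 0 0 vJ'.val = 1 := by
    rw [fromBlocks_multiply]
    simp only [Matrix.zero_mul, Matrix.mul_zero, add_zero, zero_add,
      Units.mul_inv, Units.inv_mul, Matrix.fromBlocks_one]
  refine ⟨⟨fromBlocks vJ.val 0 0 vJ'.val, fromBlocks (vJ⁻¹).val 0 0 (vJ'⁻¹).val, haa, haa'⟩,
    ?_, ⟨fromBlocks 0 vP.val (vP⁻¹).val 0, fromBlocks 0 vP.val (vP⁻¹).val 0, hgg, hgg⟩,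
    Units.ext hgg, ?_⟩
  · show fromBlocks vJ.val 0 0 vJ'.val = _
    have hJval : vJ.val = Psi (jordanBlock z n) := by
      rw [hvJ, hm]
      show (Stmt9Aux.PsiHom n) uJ.val = _
      rw [suJ, Stmt9Aux.Psi_eq]
    have hJ'val : vJ'.val = Psi (jordanBlock z⁻¹ n) := by
      rw [hvJ', hm]
      show (Stmt9Aux.PsiHom n) uJ'.val = _
      rw [suJ', Stmt9Aux.Psi_eq]
    rw [hJval, hJ'val]
  · apply Units.ext
    show fromBlocks 0 vP.val (vP⁻¹).val 0 * fromBlocks vJ.val 0 0 vJ'.val *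
        fromBlocks 0 vP.val (vP⁻¹).val 0 = fromBlocks (vJ⁻¹).val 0 0 (vJ'⁻¹).val
    rw [fromBlocks_multiply, fromBlocks_multiply]
    simp only [Matrix.zero_mul, Matrix.mul_zero, add_zero, zero_add]
    rw [e1, e2]

/-- For real `μ, ν` with `ν > 0` and `μ² + ν² ≠ 1`, setting `z = μ + iν`, and
`n ≥ 1`, the matrix `A = Ψ(J(z,n)) ⊕ Ψ(J(z⁻¹,n)) ∈ GL(4n,ℝ)` is strongly reversible in
`GL(4n,ℝ)`. -/
theorem stmt9 (μ ν : ℝ) (hν : 0 < ν) (h1 : μ ^ 2 + ν ^ 2 ≠ 1) (n : ℕ) (hn : 1 ≤ n) :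
    StronglyReversible
      (fromBlocks (Psi (jordanBlock ((⟨μ, ν⟩ : ℂ)) n)) 0 0
        (Psi (jordanBlock ((⟨μ, ν⟩ : ℂ))⁻¹ n))) := by
  exact Stmt9Aux.stmt9' μ ν hν h1 n hn
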